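/- For every f₁ : (∂Ω \ (∂Ω)_R) → ℂ and every g : (∂Ω)_L → ℂ, there exists a unique f : ∂Ω → ℂ such that f = f₁ on ∂Ω \ (∂Ω)_R and (Λ_V f)(v) = g(v) for every v ∈ (∂Ω)_L. (Lemma 4.1, part (2).) -/

import Mathlib

open Set

/-- Vertices of the square lattice. -/
abbrev Vtx : Type := ℤ × ℤ

/-- Two vertices are adjacent iff they differ by `(±1,0)` or `(0,±1)`. -/
def adjacent (v w : Vtx) : Prop := |v.1 - w.1| + |v.2 - w.2| = 1

/-- Interior vertices `D_N = {0 ≤ n₁, n₂ ≤ N}`. -/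
def interiorSq (N : ℕ) : Set Vtx :=
  {v | 0 ≤ v.1 ∧ v.1 ≤ (N : ℤ) ∧ 0 ≤ v.2 ∧ v.2 ≤ (N : ℤ)}

/-- Boundary vertices `∂Ω`. -/
def bdrySq (N : ℕ) : Set Vtx :=
  {v | v ∉ interiorSq N ∧ ∃ w ∈ interiorSq N, adjacent v w}

/-- `Ω = D_N ∪ ∂Ω`. -/
def omegaSq (N : ℕ) : Set Vtx := interiorSq N ∪ bdrySq N

/-- Left side `(∂Ω)_L`. -/
def bdryL (N : ℕ) : Set Vtx := {v | v.1 = -1 ∧ 0 ≤ v.2 ∧ v.2 ≤ (N : ℤ)}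

/-- Right side `(∂Ω)_R`. -/
def bdryR (N : ℕ) : Set Vtx := {v | v.1 = (N : ℤ) + 1 ∧ 0 ≤ v.2 ∧ v.2 ≤ (N : ℤ)}

/-- Top side `(∂Ω)_T`. -/
def bdryT (N : ℕ) : Set Vtx := {v | v.2 = (N : ℤ) + 1 ∧ 0 ≤ v.1 ∧ v.1 ≤ (N : ℤ)}

/-- Bottom side `(∂Ω)_B`. -/
def bdryB (N : ℕ) : Set Vtx := {v | v.2 = -1 ∧ 0 ≤ v.1 ∧ v.1 ≤ (N : ℤ)}

/-- For a boundary vertex, its unique neighbor `w(v)` in `D_N`. -/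
def intNbr (N : ℕ) (v : Vtx) : Vtx :=
  if v.1 = -1 then (v.1 + 1, v.2)
  else if v.1 = (N : ℤ) + 1 then (v.1 - 1, v.2)
  else if v.2 = -1 then (v.1, v.2 + 1)
  else (v.1, v.2 - 1)

/-- `u` satisfies the discrete Schrödinger equation
`(1/4)·∑_{w ∈ Ω, w ∼ v} c({v,w})·u(w) = m(v)·u(v)` at every `v ∈ D_N`
(for `v ∈ D_N` all four neighbors lie in `Ω`). -/
def DiscreteSchrodinger (N : ℕ) (c : Vtx → Vtx → ℂ) (m : Vtx → ℂ) (u : Vtx → ℂ) : Prop :=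
  ∀ v ∈ interiorSq N,
    (1 / 4 : ℂ) * (c v (v + (1, 0)) * u (v + (1, 0)) + c v (v - (1, 0)) * u (v - (1, 0))
        + c v (v + (0, 1)) * u (v + (0, 1)) + c v (v - (0, 1)) * u (v - (0, 1)))
      = m v * u v

/-- The edge weights are symmetric (weights of unordered pairs) and nonvanishing
on the edges of `E_Ω`. -/
def WeightsOK (N : ℕ) (c : Vtx → Vtx → ℂ) : Prop :=
  (∀ v w, c v w = c w v) ∧
  ∀ v w, v ∈ omegaSq N → w ∈ omegaSq N → adjacent v w →
    (v ∈ interiorSq N ∨ w ∈ interiorSq N) → c v w ≠ 0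

section AuxPartialData

set_option linter.unreachableTactic false
set_option linter.unusedTactic false

lemma adjacent_iff (v w : Vtx) : adjacent v w ↔
    (v.1 = w.1 ∧ (v.2 = w.2 + 1 ∨ v.2 = w.2 - 1)) ∨
    (v.2 = w.2 ∧ (v.1 = w.1 + 1 ∨ v.1 = w.1 - 1)) := by
  unfold adjacent
  rcases abs_cases (v.1 - w.1) with ⟨h1, _⟩ | ⟨h1, _⟩ <;>
    rcases abs_cases (v.2 - w.2) with ⟨h2, _⟩ | ⟨h2, _⟩ <;> rw [h1, h2] <;> omega

lemma mem_bdry_iff (N : ℕ) (v : Vtx) : v ∈ bdrySq N ↔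
    (v.1 = -1 ∧ 0 ≤ v.2 ∧ v.2 ≤ (N : ℤ)) ∨ (v.1 = (N : ℤ) + 1 ∧ 0 ≤ v.2 ∧ v.2 ≤ (N : ℤ)) ∨
    (v.2 = -1 ∧ 0 ≤ v.1 ∧ v.1 ≤ (N : ℤ)) ∨ (v.2 = (N : ℤ) + 1 ∧ 0 ≤ v.1 ∧ v.1 ≤ (N : ℤ)) := by
  constructor
  · rintro ⟨hni, w, hw, hadj⟩
    rw [adjacent_iff] at hadj
    simp only [interiorSq, Set.mem_setOf_eq] at hni hw
    omega
  · intro h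
    have hni : v ∉ interiorSq N := by
      simp only [interiorSq, Set.mem_setOf_eq]; omega
    rcases h with ⟨h1, h2, h3⟩ | ⟨h1, h2, h3⟩ | ⟨h1, h2, h3⟩ | ⟨h1, h2, h3⟩
    · exact ⟨hni, (v.1 + 1, v.2), by simp [interiorSq]; omega, by simp [adjacent_iff] <;> omega⟩
    · exact ⟨hni, (v.1 - 1, v.2), by simp [interiorSq]; omega, by simp [adjacent_iff] <;> omega⟩
    · exact ⟨hni, (v.1, v.2 + 1), by simp [interiorSq]; omega, by simp [adjacent_iff] <;> omega⟩
    · exact ⟨hni, (v.1, v.2 - 1), by simp [interiorSq]; omega, by simp [adjacent_iff] <;> omega⟩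

lemma mem_omega_iff (N : ℕ) (v : Vtx) : v ∈ omegaSq N ↔
    (-1 ≤ v.1 ∧ v.1 ≤ (N : ℤ) + 1 ∧ -1 ≤ v.2 ∧ v.2 ≤ (N : ℤ) + 1 ∧
      ((0 ≤ v.1 ∧ v.1 ≤ (N : ℤ)) ∨ (0 ≤ v.2 ∧ v.2 ≤ (N : ℤ)))) := by
  rw [omegaSq, Set.mem_union, mem_bdry_iff]
  simp only [interiorSq, Set.mem_setOf_eq]
  omega

/-- Column-by-column construction of the solution from left Dirichlet+Neumann data. -/
noncomputable def Ucol (N : ℕ) (c : Vtx → Vtx → ℂ) (m : Vtx → ℂ) (f₁ g : Vtx → ℂ) :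
    ℕ → ℤ → ℂ
  | 0, y => f₁ (-1, y)
  | 1, y => if 0 ≤ y ∧ y ≤ (N : ℤ) then -g (-1, y) else f₁ (0, y)
  | (k+2), y =>
      if 0 ≤ y ∧ y ≤ (N : ℤ) then
        (4 * m ((k : ℤ), y) * Ucol N c m f₁ g (k+1) y
          - c ((k : ℤ), y) ((k : ℤ) - 1, y) * Ucol N c m f₁ g k y
          - c ((k : ℤ), y) ((k : ℤ), y + 1) * Ucol N c m f₁ g (k+1) (y + 1)
          - c ((k : ℤ), y) ((k : ℤ), y - 1) * Ucol N c m f₁ g (k+1) (y - 1))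
        / c ((k : ℤ), y) ((k : ℤ) + 1, y)
      else f₁ ((k : ℤ) + 1, y)

variable (N : ℕ) (c : Vtx → Vtx → ℂ) (m : Vtx → ℂ) (f₁ g : Vtx → ℂ)

/-- The constructed function on vertices. -/
noncomputable def uFun : Vtx → ℂ := fun v => Ucol N c m f₁ g (v.1 + 1).toNat v.2

lemma cplus_ne (hc : WeightsOK N c) {x y : ℤ} (hx0 : 0 ≤ x) (hxN : x ≤ (N : ℤ))
    (hy0 : 0 ≤ y) (hyN : y ≤ (N : ℤ)) : c (x, y) (x + 1, y) ≠ 0 := by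
  apply hc.2
  · rw [mem_omega_iff]; simp; omega
  · rw [mem_omega_iff]; simp; omega
  · simp [adjacent_iff] <;> omega
  · left; exact ⟨hx0, hxN, hy0, hyN⟩

/-- Characterization: any solution with the given left data agrees with `Ucol`. -/
lemma char_lemma (hc : WeightsOK N c) (w : Vtx → ℂ)
    (hS : DiscreteSchrodinger N c m w)
    (hD : ∀ v ∈ bdrySq N \ bdryR N, w v = f₁ v)
    (hNeu : ∀ y : ℤ, 0 ≤ y → y ≤ (N : ℤ) → w (0, y) = -g (-1, y)) :
    ∀ k : ℕ, ∀ y : ℤ, ((k : ℤ) - 1, y) ∈ omegaSq N →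
      w ((k : ℤ) - 1, y) = Ucol N c m f₁ g k y := by
  intro k
  induction k using Nat.strong_induction_on with
  | _ k IH =>
    rcases k with _ | _ | j
    · -- k = 0 : left boundary
      intro y hy
      rw [mem_omega_iff] at hy
      simp only at hy
      have hyr : 0 ≤ y ∧ y ≤ (N : ℤ) := by omega
      have hb : ((-1 : ℤ), y) ∈ bdrySq N \ bdryR N := by
        constructor
        · rw [mem_bdry_iff]; left; exact ⟨rfl, hyr.1, hyr.2⟩
        · simp [bdryR]; omega
      have := hD _ hb
      simpa [Ucol] using this
    · -- k = 1 : column 0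
      intro y hy
      rw [mem_omega_iff] at hy
      simp only at hy
      norm_num
      rw [Ucol]
      by_cases hyr : 0 ≤ y ∧ y ≤ (N : ℤ)
      · rw [if_pos hyr]; exact hNeu y hyr.1 hyr.2
      · rw [if_neg hyr]
        have hb : ((0 : ℤ), y) ∈ bdrySq N \ bdryR N := by
          constructor
          · rw [mem_bdry_iff]
            rcases (by omega : y = -1 ∨ y = (N : ℤ) + 1) with h | h
            · right; right; left; refine ⟨h, le_refl _, by exact_mod_cast Nat.cast_nonneg N⟩
            · right; right; right; refine ⟨h, le_refl _, by exact_mod_cast Nat.cast_nonneg N⟩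
          · simp [bdryR]; omega
        exact hD _ hb
    · -- k = j + 2
      intro y hy
      rw [mem_omega_iff] at hy
      simp only at hy
      have hcast : ((j : ℤ) + 2) - 1 = (j : ℤ) + 1 := by ring
      have hj : (j : ℤ) + 1 ≤ (N : ℤ) + 1 := by push_cast at hy ⊢; omega
      rw [show (((j + 2 : ℕ) : ℤ) - 1) = (j : ℤ) + 1 by push_cast; ring]
      rw [Ucol]
      by_cases hyr : 0 ≤ y ∧ y ≤ (N : ℤ)
      · rw [if_pos hyr]
        -- use the Schrödinger equation at (j, y)
        have hint : ((j : ℤ), y) ∈ interiorSq N :=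
          ⟨Int.ofNat_nonneg j, by omega, hyr.1, hyr.2⟩
        have heq := hS _ hint
        have e1 : ((j : ℤ), y) + ((1 : ℤ), (0 : ℤ)) = ((j : ℤ) + 1, y) := by
          simp [Prod.ext_iff]
        have e2 : ((j : ℤ), y) - ((1 : ℤ), (0 : ℤ)) = ((j : ℤ) - 1, y) := by
          simp [Prod.ext_iff]
        have e3 : ((j : ℤ), y) + ((0 : ℤ), (1 : ℤ)) = ((j : ℤ), y + 1) := by
          simp [Prod.ext_iff]
        have e4 : ((j : ℤ), y) - ((0 : ℤ), (1 : ℤ)) = ((j : ℤ), y - 1) := by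
          simp [Prod.ext_iff]
        rw [e1, e2, e3, e4] at heq
        -- rewrite the known values via the induction hypotheses
        have ih1 : w ((j : ℤ), y) = Ucol N c m f₁ g (j + 1) y := by
          have := IH (j + 1) (by omega) y (by rw [mem_omega_iff]; push_cast; simp; omega)
          simpa using this
        have ih2 : w ((j : ℤ) - 1, y) = Ucol N c m f₁ g j y := by
          have := IH j (by omega) y (by rw [mem_omega_iff]; push_cast; simp; omega)
          simpa using this
        have ih3 : w ((j : ℤ), y + 1) = Ucol N c m f₁ g (j + 1) (y + 1) := by
          have := IH (j + 1) (by omega) (y + 1)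
            (by rw [mem_omega_iff]; push_cast; simp; omega)
          simpa using this
        have ih4 : w ((j : ℤ), y - 1) = Ucol N c m f₁ g (j + 1) (y - 1) := by
          have := IH (j + 1) (by omega) (y - 1)
            (by rw [mem_omega_iff]; push_cast; simp; omega)
          simpa using this
        rw [ih1, ih2, ih3, ih4] at heq
        have hcne : c ((j : ℤ), y) ((j : ℤ) + 1, y) ≠ 0 :=
          cplus_ne N c hc (Int.ofNat_nonneg j) (by omega) hyr.1 hyr.2
        rw [eq_div_iff hcne]
        push_cast
        linear_combination (4 : ℂ) * heq
      · rw [if_neg hyr]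
        have hb : ((j : ℤ) + 1, y) ∈ bdrySq N \ bdryR N := by
          constructor
          · rw [mem_bdry_iff]
            rcases (by omega : y = -1 ∨ y = (N : ℤ) + 1) with h | h
            · right; right; left; exact ⟨h, by omega, by omega⟩
            · right; right; right; exact ⟨h, by omega, by omega⟩
          · simp [bdryR]; omega
        exact hD _ hb

lemma uFun_schrodinger (hc : WeightsOK N c) : DiscreteSchrodinger N c m (uFun N c m f₁ g) := by
  rintro ⟨x, y⟩ ⟨hx0, hxN, hy0, hyN⟩
  simp only at hx0 hxN hy0 hyN
  obtain ⟨k, rfl⟩ : ∃ k : ℕ, x = (k : ℤ) := ⟨x.toNat, (Int.toNat_of_nonneg hx0).symm⟩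
  have e1 : ((k : ℤ), y) + ((1 : ℤ), (0 : ℤ)) = ((k : ℤ) + 1, y) := by simp [Prod.ext_iff]
  have e2 : ((k : ℤ), y) - ((1 : ℤ), (0 : ℤ)) = ((k : ℤ) - 1, y) := by simp [Prod.ext_iff]
  have e3 : ((k : ℤ), y) + ((0 : ℤ), (1 : ℤ)) = ((k : ℤ), y + 1) := by simp [Prod.ext_iff]
  have e4 : ((k : ℤ), y) - ((0 : ℤ), (1 : ℤ)) = ((k : ℤ), y - 1) := by simp [Prod.ext_iff]
  rw [e1, e2, e3, e4]
  have u1 : uFun N c m f₁ g ((k : ℤ) + 1, y) = Ucol N c m f₁ g (k + 2) y := by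
    simp only [uFun]; congr 1 <;> omega
  have u2 : uFun N c m f₁ g ((k : ℤ) - 1, y) = Ucol N c m f₁ g k y := by
    simp only [uFun]; congr 1 <;> omega
  have u3 : uFun N c m f₁ g ((k : ℤ), y + 1) = Ucol N c m f₁ g (k + 1) (y + 1) := by
    simp only [uFun]; congr 1 <;> omega
  have u4 : uFun N c m f₁ g ((k : ℤ), y - 1) = Ucol N c m f₁ g (k + 1) (y - 1) := by
    simp only [uFun]; congr 1 <;> omega
  have u0 : uFun N c m f₁ g ((k : ℤ), y) = Ucol N c m f₁ g (k + 1) y := by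
    simp only [uFun]; congr 1 <;> omega
  rw [u1, u2, u3, u4, u0]
  rw [Ucol, if_pos ⟨hy0, hyN⟩]
  have hcne : c ((k : ℤ), y) ((k : ℤ) + 1, y) ≠ 0 :=
    cplus_ne N c hc (Int.ofNat_nonneg k) hxN hy0 hyN
  field_simp
  ring

lemma uFun_bdry_left (v : Vtx) (hv : v ∈ bdrySq N \ bdryR N) :
    uFun N c m f₁ g v = f₁ v := by
  obtain ⟨x, y⟩ := v
  have hb := (mem_bdry_iff N (x, y)).mp hv.1
  have hr : ¬((x = (N : ℤ) + 1) ∧ 0 ≤ y ∧ y ≤ (N : ℤ)) := by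
    intro h; exact hv.2 h
  simp only at hb hr
  rcases hb with ⟨h1, h2, h3⟩ | ⟨h1, h2, h3⟩ | ⟨h1, h2, h3⟩ | ⟨h1, h2, h3⟩
  · subst h1; simp [uFun, Ucol]
  · exact absurd ⟨h1, h2, h3⟩ hr
  · -- bottom: y = -1
    subst h1
    rcases Nat.eq_zero_or_pos (x + 1).toNat with h | h
    · omega
    · obtain ⟨k, hk⟩ : ∃ k : ℕ, (x + 1).toNat = k + 1 := ⟨(x + 1).toNat - 1, by omega⟩
      rcases k with _ | j
      · have hx : x = 0 := by omega
        subst hx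
        simp only [uFun, Ucol]
        norm_num
        rw [Ucol, if_neg (by omega)]
      · have hx : x = (j : ℤ) + 1 := by omega
        simp only [uFun, hk, Ucol]
        rw [if_neg (by omega)]
        rw [hx]
  · -- top: y = N+1
    subst h1
    rcases Nat.eq_zero_or_pos (x + 1).toNat with h | h
    · omega
    · obtain ⟨k, hk⟩ : ∃ k : ℕ, (x + 1).toNat = k + 1 := ⟨(x + 1).toNat - 1, by omega⟩
      rcases k with _ | j
      · have hx : x = 0 := by omega
        subst hx
        simp only [uFun, Ucol]
        rw [show ((0:ℤ) + 1).toNat = 1 from rfl, Ucol]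
        rw [if_neg (by omega)]
      · have hx : x = (j : ℤ) + 1 := by omega
        simp only [uFun, hk, Ucol]
        rw [if_neg (by omega)]
        rw [hx]

end AuxPartialData

/-- Lemma 4.1(2): given the vertex D-N map `Λ_V` (encoded by the Dirichlet
solution operator `sol`, with `(Λ_V f)(v) = −(sol f)(w(v))`), partial Dirichlet data `f₁`
on `∂Ω \ (∂Ω)_R` and partial Neumann data `g` on `(∂Ω)_L`, there is a unique `f` on `∂Ω`
with `f = f₁` on `∂Ω \ (∂Ω)_R` and `Λ_V f = g` on `(∂Ω)_L`. -/
theorem partial_data_boundary_extension (N : ℕ) (hN : 1 ≤ N)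
    (c : Vtx → Vtx → ℂ) (m : Vtx → ℂ) (hc : WeightsOK N c)
    (sol : (Vtx → ℂ) → (Vtx → ℂ))
    (hsol : ∀ h, DiscreteSchrodinger N c m (sol h) ∧ Set.EqOn (sol h) h (bdrySq N))
    (huniq : ∀ h u, DiscreteSchrodinger N c m u → Set.EqOn u h (bdrySq N) →
      Set.EqOn u (sol h) (omegaSq N))
    (f₁ g : Vtx → ℂ) :
    ∃ f : Vtx → ℂ,
      ((∀ v ∈ bdrySq N \ bdryR N, f v = f₁ v) ∧
        ∀ v ∈ bdryL N, -sol f (intNbr N v) = g v) ∧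
      ∀ f' : Vtx → ℂ,
        ((∀ v ∈ bdrySq N \ bdryR N, f' v = f₁ v) ∧
          ∀ v ∈ bdryL N, -sol f' (intNbr N v) = g v) →
        Set.EqOn f' f (bdrySq N) := by
  classical
  set u : Vtx → ℂ := uFun N c m f₁ g with hu
  set f : Vtx → ℂ := fun v => if v.1 = (N : ℤ) + 1 then u v else f₁ v with hf
  have hEq : Set.EqOn u f (bdrySq N) := by
    intro v hv
    by_cases h : v.1 = (N : ℤ) + 1
    · simp [hf, h]
    · have hvd : v ∈ bdrySq N \ bdryR N := ⟨hv, fun hr => h hr.1⟩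
      simp only [hf, if_neg h]
      exact uFun_bdry_left N c m f₁ g v hvd
  have hSch : DiscreteSchrodinger N c m u := uFun_schrodinger N c m f₁ g hc
  have hsolf : Set.EqOn u (sol f) (omegaSq N) := huniq f u hSch hEq
  have hA : ∀ v ∈ bdrySq N \ bdryR N, f v = f₁ v := by
    intro v hv
    have hne : v.1 ≠ (N : ℤ) + 1 := by
      intro h
      have hb := (mem_bdry_iff N v).mp hv.1
      exact hv.2 ⟨h, by omega⟩
    simp [hf, hne]
  have hB : ∀ v ∈ bdryL N, -sol f (intNbr N v) = g v := by
    intro v hv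
    obtain ⟨h1, h2, h3⟩ := hv
    have hnb : intNbr N v = (0, v.2) := by
      rw [intNbr, if_pos h1, h1]; norm_num
    have hmem : ((0 : ℤ), v.2) ∈ omegaSq N := by
      rw [mem_omega_iff]; simp; omega
    have hval : u ((0 : ℤ), v.2) = -g (-1, v.2) := by
      have h01 : u ((0 : ℤ), v.2) = Ucol N c m f₁ g 1 v.2 := rfl
      rw [h01, Ucol, if_pos ⟨h2, h3⟩]
    have hv2 : v = (-1, v.2) := by
      rw [Prod.ext_iff]; exact ⟨h1, rfl⟩
    rw [hnb, ← hsolf hmem, hval, hv2]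
    ring
  refine ⟨f, ⟨hA, hB⟩, ?_⟩
  rintro f' ⟨hA', hB'⟩ v hv
  have hS' := (hsol f').1
  have hD' : ∀ w ∈ bdrySq N \ bdryR N, sol f' w = f₁ w := fun w hw =>
    ((hsol f').2 hw.1).trans (hA' w hw)
  have hNeu' : ∀ y : ℤ, 0 ≤ y → y ≤ (N : ℤ) → sol f' (0, y) = -g (-1, y) := by
    intro y hy0 hyN
    have hvL : ((-1 : ℤ), y) ∈ bdryL N := ⟨rfl, hy0, hyN⟩
    have := hB' _ hvL
    have hnb : intNbr N ((-1 : ℤ), y) = ((0 : ℤ), y) := by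
      rw [intNbr, if_pos rfl]; norm_num
    rw [hnb] at this
    linear_combination -this
  have hchar := char_lemma N c m f₁ g hc (sol f') hS' hD' hNeu'
  have hv1 : -1 ≤ v.1 ∧ v.1 ≤ (N : ℤ) + 1 := by
    have := (mem_omega_iff N v).mp (Set.mem_union_right _ hv)
    exact ⟨this.1, this.2.1⟩
  have hk : (((v.1 + 1).toNat : ℤ) - 1) = v.1 := by omega
  have hmemv : (((((v.1 + 1).toNat : ℤ)) - 1), v.2) ∈ omegaSq N := by
    rw [hk]; exact Set.mem_union_right _ hv
  have hcv := hchar (v.1 + 1).toNat v.2 hmemv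
  rw [hk] at hcv
  have hveq : (v.1, v.2) = v := rfl
  rw [hveq] at hcv
  have huv : u v = Ucol N c m f₁ g (v.1 + 1).toNat v.2 := rfl
  calc f' v = sol f' v := ((hsol f').2 hv).symm
    _ = Ucol N c m f₁ g (v.1 + 1).toNat v.2 := hcv
    _ = u v := huv.symm
    _ = f v := hEq hv
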